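/- Let H ≠ 0 and k > −1 with k ≠ 1, and let X(r,t) = (λ(r) + h·φ(r,t), ρ(r)·cos φ(r,t), ρ(r)·sin φ(r,t)) with δ(r) = (r² + k + 1)² − 4k, Δ(r) = 2(k+1)r² + (1−k)², h = (1−k)/(2H(1+k)), ρ(r) = √Δ(r)/(2H(k+1)), λ(r) = ∫₀^r √(2(1+k))·τ⁴/(H√δ(τ)·Δ(τ)) dτ, φ(r,t) = ∫₀^r √(2(1+k))·(1−k)·τ²/(√δ(τ)·Δ(τ)) dτ − √((1+k)/2)·t. Then for every t ∈ ℝ, det(X_t, X_{rr}, X_{rrr})(0, t) = 0. -/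

import Mathlib

noncomputable section

open Set

/-- Euclidean inner product on `ℝ³`. -/
def dot3 (a b : Fin 3 → ℝ) : ℝ := a 0 * b 0 + a 1 * b 1 + a 2 * b 2

/-- Determinant of the 3×3 matrix with the given rows. -/
def det3 (a b c : Fin 3 → ℝ) : ℝ := Matrix.det (Matrix.of ![a, b, c])

/-- Partial derivative with respect to the first variable. -/
def pdU (X : ℝ × ℝ → Fin 3 → ℝ) (p : ℝ × ℝ) : Fin 3 → ℝ := fderiv ℝ X p ((1:ℝ), (0:ℝ))

/-- Partial derivative with respect to the second variable. -/
def pdV (X : ℝ × ℝ → Fin 3 → ℝ) (p : ℝ × ℝ) : Fin 3 → ℝ := fderiv ℝ X p ((0:ℝ), (1:ℝ))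

/-- Directional derivative of `X` along the vector field `ζ`. -/
def vfD (ζ : ℝ × ℝ → ℝ × ℝ) (X : ℝ × ℝ → Fin 3 → ℝ) : ℝ × ℝ → Fin 3 → ℝ :=
  fun p => fderiv ℝ X p (ζ p)

/-- `k`-fold iterated directional derivative of `X` along the vector field `ζ`. -/
def vfDIter (ζ : ℝ × ℝ → ℝ × ℝ) (k : ℕ) (X : ℝ × ℝ → Fin 3 → ℝ) : ℝ × ℝ → Fin 3 → ℝ :=
  (vfD ζ)^[k] X

/-- `p` is a singular point of `X` : the differential has rank < 2, i.e. the two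
partial derivative vectors are linearly dependent. -/
def IsSingularPt (X : ℝ × ℝ → Fin 3 → ℝ) (p : ℝ × ℝ) : Prop :=
  ¬ LinearIndependent ℝ ![pdU X p, pdV X p]

/-- `f` is a diffeomorphism from the open set `s` onto the open set `t`. -/
def IsDiffeoOn {E F : Type*} [NormedAddCommGroup E] [NormedSpace ℝ E]
    [NormedAddCommGroup F] [NormedSpace ℝ F] (f : E → F) (s : Set E) (t : Set F) : Prop :=
  IsOpen s ∧ IsOpen t ∧ ContDiffOn ℝ (⊤:ℕ∞) f s ∧ Set.BijOn f s t ∧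
    ∃ finv : F → E, ContDiffOn ℝ (⊤:ℕ∞) finv t ∧ (∀ x ∈ s, finv (f x) = x) ∧
      ∀ y ∈ t, f (finv y) = y

/-- `p` is a (2,5)-cuspidal edge of `X` (with domain `D`): up to diffeomorphisms of the
source (taking `0` to `p`, with image inside `D`) and of the target, `X` is
`(u,v) ↦ (u, v², v⁵)`. -/
def IsCuspidalEdge25 (D : Set (ℝ × ℝ)) (X : ℝ × ℝ → Fin 3 → ℝ) (p : ℝ × ℝ) : Prop :=
  ∃ (s t : Set (ℝ × ℝ)) (φ : ℝ × ℝ → ℝ × ℝ)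
    (s' t' : Set (Fin 3 → ℝ)) (Φ : (Fin 3 → ℝ) → (Fin 3 → ℝ)),
    ((0:ℝ), (0:ℝ)) ∈ s ∧ φ ((0:ℝ), (0:ℝ)) = p ∧ t ⊆ D ∧ IsDiffeoOn φ s t ∧
    X p ∈ s' ∧ IsDiffeoOn Φ s' t' ∧
    ∀ w ∈ s, X (φ w) ∈ s' ∧ Φ (X (φ w)) = ![w.1, w.2 ^ 2, w.2 ^ 5]

/-- `X` is a frontal on the open set `U` : it is smooth and locally admits a smooth unit
normal vector field orthogonal to both partial derivatives. -/
def IsFrontalOn (X : ℝ × ℝ → Fin 3 → ℝ) (U : Set (ℝ × ℝ)) : Prop :=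
  ContDiffOn ℝ (⊤:ℕ∞) X U ∧ ∀ q ∈ U, ∃ V, IsOpen V ∧ q ∈ V ∧ V ⊆ U ∧
    ∃ n : ℝ × ℝ → Fin 3 → ℝ, ContDiffOn ℝ (⊤:ℕ∞) n V ∧
      ∀ x ∈ V, dot3 (n x) (n x) = 1 ∧ dot3 (n x) (pdU X x) = 0 ∧ dot3 (n x) (pdV X x) = 0

/-- `p` is a non-degenerate singular point of `X` : it is singular and the signed area
density `λ = det(X_u, X_v, n)` (for a local unit normal `n`) has nonvanishing
differential at `p`. -/
def IsNondegSing (X : ℝ × ℝ → Fin 3 → ℝ) (U : Set (ℝ × ℝ)) (p : ℝ × ℝ) : Prop :=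
  IsSingularPt X p ∧ ∃ V, IsOpen V ∧ p ∈ V ∧ V ⊆ U ∧
    ∃ n : ℝ × ℝ → Fin 3 → ℝ, ContDiffOn ℝ (⊤:ℕ∞) n V ∧
      (∀ x ∈ V, dot3 (n x) (n x) = 1 ∧ dot3 (n x) (pdU X x) = 0 ∧
        dot3 (n x) (pdV X x) = 0) ∧
      fderiv ℝ (fun x => det3 (pdU X x) (pdV X x) (n x)) p ≠ 0

/-- `δ(r) = (r² + k + 1)² − 4k`. -/
def δT (k r : ℝ) : ℝ := (r ^ 2 + k + 1) ^ 2 - 4 * k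

/-- `Δ(r) = 2(k+1)r² + (1−k)²`. -/
def ΔT (k r : ℝ) : ℝ := 2 * (k + 1) * r ^ 2 + (1 - k) ^ 2

/-- `h = (1−k)/(2H(1+k))`. -/
def hT (H k : ℝ) : ℝ := (1 - k) / (2 * H * (1 + k))

/-- `ρ(r) = √Δ(r)/(2H(k+1))`. -/
def ρT (H k r : ℝ) : ℝ := Real.sqrt (ΔT k r) / (2 * H * (k + 1))

/-- `λ(r) = ∫₀^r √(2(1+k))·τ⁴/(H√δ(τ)·Δ(τ)) dτ`. -/
def lamT (H k r : ℝ) : ℝ :=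
  ∫ τ in (0:ℝ)..r, Real.sqrt (2 * (1 + k)) * τ ^ 4 / (H * Real.sqrt (δT k τ) * ΔT k τ)

/-- `φ(r,t) = ∫₀^r √(2(1+k))·(1−k)·τ²/(√δ(τ)·Δ(τ)) dτ − √((1+k)/2)·t`. -/
def φT (H k r t : ℝ) : ℝ :=
  (∫ τ in (0:ℝ)..r,
      Real.sqrt (2 * (1 + k)) * (1 - k) * τ ^ 2 / (Real.sqrt (δT k τ) * ΔT k τ))
    - Real.sqrt ((1 + k) / 2) * t

/-- The conjugate of the spacelike Delaunay surface with timelike axis (`k > −1`):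
`X(r,t) = (λ(r) + h·φ(r,t), ρ(r)·cos φ(r,t), ρ(r)·sin φ(r,t))`. -/
def XT (H k : ℝ) (p : ℝ × ℝ) : Fin 3 → ℝ :=
  ![lamT H k p.1 + hT H k * φT H k p.1 p.2,
    ρT H k p.1 * Real.cos (φT H k p.1 p.2),
    ρT H k p.1 * Real.sin (φT H k p.1 p.2)]

namespace DelAux

def sdA (k r : ℝ) : ℝ := Real.sqrt (δT k r)
def sDA (k r : ℝ) : ℝ := Real.sqrt (ΔT k r)
def ddA (k r : ℝ) : ℝ := 4*r*(r^2+k+1)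
def dDA (k r : ℝ) : ℝ := 4*(k+1)*r
def sd1A (k r : ℝ) : ℝ := ddA k r/(2*sdA k r)
def sD1A (k r : ℝ) : ℝ := dDA k r/(2*sDA k r)
def gA (k r : ℝ) : ℝ := Real.sqrt (2*(1+k)) * (1-k) * r^2/(sdA k r * ΔT k r)
def DenA (k r : ℝ) : ℝ := sdA k r * ΔT k r
def Den1A (k r : ℝ) : ℝ := sd1A k r * ΔT k r + sdA k r * dDA k r
def g1A (k r : ℝ) : ℝ :=
  r * (Real.sqrt (2*(1+k)) * (1-k) * (2*DenA k r - r*Den1A k r)/(DenA k r)^2)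
def lA (H k r : ℝ) : ℝ := Real.sqrt (2*(1+k)) * r^4/(H * sdA k r * ΔT k r)
def DenH1A (H k r : ℝ) : ℝ := H * sd1A k r * ΔT k r + H * sdA k r * dDA k r
def l1A (H k r : ℝ) : ℝ :=
  r^3 * (Real.sqrt (2*(1+k)) * (4*(H * sdA k r * ΔT k r) - r*DenH1A H k r)/(H * sdA k r * ΔT k r)^2)
def R1A (H k r : ℝ) : ℝ := r/(H * sDA k r)
def R2A (H k r : ℝ) : ℝ := (1-k)^2/(H*(sDA k r * ΔT k r))

variable {H k : ℝ}

theorem hδpos (hk : -1 < k) (hk' : k ≠ 1) (r : ℝ) : 0 < δT k r := by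
  have h1 : (0:ℝ) < (k-1)^2 := by
    have : k - 1 ≠ 0 := sub_ne_zero.mpr hk'
    positivity
  unfold δT
  nlinarith [sq_nonneg (r^2), sq_nonneg r]

theorem hΔpos (hk : -1 < k) (hk' : k ≠ 1) (r : ℝ) : 0 < ΔT k r := by
  have h1 : (0:ℝ) < (1-k)^2 := by
    have : 1 - k ≠ 0 := sub_ne_zero.mpr (Ne.symm hk')
    positivity
  unfold ΔT
  nlinarith [sq_nonneg r]

theorem hsdpos (hk : -1 < k) (hk' : k ≠ 1) (r : ℝ) : 0 < sdA k r :=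
  Real.sqrt_pos.mpr (hδpos hk hk' r)

theorem hsDpos (hk : -1 < k) (hk' : k ≠ 1) (r : ℝ) : 0 < sDA k r :=
  Real.sqrt_pos.mpr (hΔpos hk hk' r)

theorem hδ' (r : ℝ) : HasDerivAt (δT k) (ddA k r) r := by
  have h1 : HasDerivAt (fun x : ℝ => x^2+k+1) (2*r) r := by
    simpa using (((hasDerivAt_pow 2 r).add_const k).add_const 1)
  have h : HasDerivAt (fun x : ℝ => (x^2+k+1)^2 - 4*k) (2*(r^2+k+1)^1*(2*r)) r :=
    (h1.pow 2).sub_const (4*k)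
  have he : ddA k r = 2*(r^2+k+1)^1*(2*r) := by unfold ddA; ring
  rw [he]; exact h

theorem hΔ' (r : ℝ) : HasDerivAt (ΔT k) (dDA k r) r := by
  have h : HasDerivAt (fun x : ℝ => 2*(k+1)*x^2 + (1-k)^2) (2*(k+1)*(2*r)) r := by
    simpa using (((hasDerivAt_pow 2 r).const_mul (2*(k+1))).add_const ((1-k)^2))
  have he : dDA k r = 2*(k+1)*(2*r) := by unfold dDA; ring
  rw [he]; exact h

theorem hsd' (hk : -1 < k) (hk' : k ≠ 1) (r : ℝ) : HasDerivAt (sdA k) (sd1A k r) r :=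
  (hδ' r).sqrt (ne_of_gt (hδpos hk hk' r))

theorem hsD' (hk : -1 < k) (hk' : k ≠ 1) (r : ℝ) : HasDerivAt (sDA k) (sD1A k r) r :=
  (hΔ' r).sqrt (ne_of_gt (hΔpos hk hk' r))

theorem hDen' (hk : -1 < k) (hk' : k ≠ 1) (r : ℝ) :
    HasDerivAt (DenA k) (Den1A k r) r := by
  have h : HasDerivAt (fun r => sdA k r * ΔT k r) (sd1A k r * ΔT k r + sdA k r * dDA k r) r :=
    (hsd' hk hk' r).mul (hΔ' r)
  exact h

theorem hDenne (hk : -1 < k) (hk' : k ≠ 1) (r : ℝ) : DenA k r ≠ 0 :=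
  ne_of_gt (mul_pos (hsdpos hk hk' r) (hΔpos hk hk' r))

theorem hg' (hk : -1 < k) (hk' : k ≠ 1) (r : ℝ) : HasDerivAt (gA k) (g1A k r) r := by
  have hnum : HasDerivAt (fun r : ℝ => Real.sqrt (2*(1+k)) * (1-k) * r^2)
      (Real.sqrt (2*(1+k)) * (1-k) * (2*r)) r := by
    simpa [mul_assoc, mul_comm, mul_left_comm] using
      ((hasDerivAt_pow 2 r).const_mul (Real.sqrt (2*(1+k)) * (1-k)))
  have h := hnum.div (hDen' hk hk' r) (hDenne hk hk' r)
  refine h.congr_deriv ?_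
  symm
  have hne := hDenne hk hk' r
  unfold g1A Den1A DenA at *
  field_simp

theorem hlam' (hk : -1 < k) (hk' : k ≠ 1) (hH : H ≠ 0) (r : ℝ) :
    HasDerivAt (lamT H k) (lA H k r) r := by
  have hcont : Continuous (fun τ : ℝ =>
      Real.sqrt (2 * (1 + k)) * τ ^ 4 / (H * Real.sqrt (δT k τ) * ΔT k τ)) := by
    apply Continuous.div
    · fun_prop
    · unfold δT ΔT; fun_prop
    · intro x
      exact mul_ne_zero (mul_ne_zero hH (ne_of_gt (hsdpos hk hk' x)))
        (ne_of_gt (hΔpos hk hk' x))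
  have h := (hcont.integral_hasStrictDerivAt 0 r).hasDerivAt
  have he : lA H k r = Real.sqrt (2 * (1 + k)) * r ^ 4 / (H * Real.sqrt (δT k r) * ΔT k r) := by
    unfold lA sdA; ring
  rw [he]; exact h

theorem hl' (hk : -1 < k) (hk' : k ≠ 1) (hH : H ≠ 0) (r : ℝ) :
    HasDerivAt (lA H k) (l1A H k r) r := by
  have hnum : HasDerivAt (fun r : ℝ => Real.sqrt (2*(1+k)) * r^4)
      (Real.sqrt (2*(1+k)) * (4*r^3)) r := by
    simpa [mul_assoc, mul_comm, mul_left_comm] using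
      ((hasDerivAt_pow 4 r).const_mul (Real.sqrt (2*(1+k))))
  have hden : HasDerivAt (fun r : ℝ => H * sdA k r * ΔT k r)
      (H * sd1A k r * ΔT k r + H * sdA k r * dDA k r) r := by
    have h1 : HasDerivAt (fun r : ℝ => H * sdA k r) (H * sd1A k r) r :=
      (hsd' hk hk' r).const_mul H
    exact h1.mul (hΔ' r)
  have hdnz : H * sdA k r * ΔT k r ≠ 0 :=
    mul_ne_zero (mul_ne_zero hH (ne_of_gt (hsdpos hk hk' r))) (ne_of_gt (hΔpos hk hk' r))
  have h := hnum.div hden hdnz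
  refine h.congr_deriv ?_
  symm
  unfold l1A DenH1A
  field_simp

theorem hρ' (hk : -1 < k) (hk' : k ≠ 1) (hH : H ≠ 0) (r : ℝ) :
    HasDerivAt (ρT H k) (R1A H k r) r := by
  have h := (hsD' hk hk' r).div_const (2*H*(k+1))
  have he : (fun r => sDA k r / (2*H*(k+1))) = ρT H k := by
    funext x; unfold sDA ρT; rfl
  rw [he] at h
  refine h.congr_deriv ?_
  symm
  have hsD := hsDpos hk hk' r
  have hk1 : (0:ℝ) < k + 1 := by linarith
  have hsq : sDA k r ^ 2 = ΔT k r := Real.sq_sqrt (le_of_lt (hΔpos hk hk' r))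
  unfold R1A sD1A dDA
  field_simp
  ring

theorem hR1' (hk : -1 < k) (hk' : k ≠ 1) (hH : H ≠ 0) (r : ℝ) :
    HasDerivAt (R1A H k) (R2A H k r) r := by
  have hden : HasDerivAt (fun r : ℝ => H * sDA k r) (H * sD1A k r) r :=
    (hsD' hk hk' r).const_mul H
  have hdnz : H * sDA k r ≠ 0 := mul_ne_zero hH (ne_of_gt (hsDpos hk hk' r))
  have h := (hasDerivAt_id r).div hden hdnz
  refine h.congr_deriv ?_
  symm
  have hsD := hsDpos hk hk' r
  have hΔp := hΔpos hk hk' r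
  have hsq : sDA k r ^ 2 = ΔT k r := Real.sq_sqrt (le_of_lt hΔp)
  have hSne : sDA k r ≠ 0 := ne_of_gt hsD
  unfold R2A sD1A dDA
  rw [div_eq_div_iff (by exact mul_ne_zero hH (mul_ne_zero hSne (ne_of_gt hΔp)))
    (by positivity)]
  unfold ΔT at hsq ⊢
  field_simp
  simp only [id_eq]
  linear_combination (-(4*(1+k)*r^2)) * hsq

theorem gA_zero : gA k 0 = 0 := by unfold gA; simp
theorem g1A_zero : g1A k 0 = 0 := by unfold g1A; simp
theorem l1A_zero : l1A H k 0 = 0 := by unfold l1A; simp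
theorem R1A_zero : R1A H k 0 = 0 := by unfold R1A; simp


theorem hAint (hk : -1 < k) (hk' : k ≠ 1) (r : ℝ) :
    HasDerivAt (fun x : ℝ => ∫ τ in (0:ℝ)..x,
      Real.sqrt (2 * (1 + k)) * (1 - k) * τ ^ 2 / (Real.sqrt (δT k τ) * ΔT k τ))
      (gA k r) r := by
  have hcont : Continuous (fun τ : ℝ =>
      Real.sqrt (2 * (1 + k)) * (1 - k) * τ ^ 2 / (Real.sqrt (δT k τ) * ΔT k τ)) := by
    apply Continuous.div
    · fun_prop
    · unfold δT ΔT; fun_prop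
    · intro x
      exact mul_ne_zero (ne_of_gt (hsdpos hk hk' x)) (ne_of_gt (hΔpos hk hk' x))
  have h := (hcont.integral_hasStrictDerivAt 0 r).hasDerivAt
  have he : gA k r
      = Real.sqrt (2 * (1 + k)) * (1 - k) * r ^ 2 / (Real.sqrt (δT k r) * ΔT k r) := by
    unfold gA sdA; ring
  rw [he]; exact h

theorem sdA_diff (hk : -1 < k) (hk' : k ≠ 1) (r : ℝ) : DifferentiableAt ℝ (sdA k) r :=
  (hsd' hk hk' r).differentiableAt

theorem sd1A_diff (hk : -1 < k) (hk' : k ≠ 1) (r : ℝ) : DifferentiableAt ℝ (sd1A k) r := by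
  unfold sd1A
  apply DifferentiableAt.div
  · unfold ddA; fun_prop
  · exact (differentiableAt_const 2).mul (sdA_diff hk hk' r)
  · have := hsdpos hk hk' r; positivity

theorem ΔT_diff (r : ℝ) : DifferentiableAt ℝ (ΔT k) r := (hΔ' r).differentiableAt

set_option maxHeartbeats 1000000 in
theorem hl1'0 (hk : -1 < k) (hk' : k ≠ 1) (hH : H ≠ 0) :
    HasDerivAt (l1A H k) 0 0 := by
  have hden : DifferentiableAt ℝ (fun r : ℝ => H * sdA k r * ΔT k r) 0 :=
    (((sdA_diff hk hk' 0).const_mul H).mul (ΔT_diff 0))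
  have hdnz : H * sdA k 0 * ΔT k 0 ≠ 0 :=
    mul_ne_zero (mul_ne_zero hH (ne_of_gt (hsdpos hk hk' 0))) (ne_of_gt (hΔpos hk hk' 0))
  have hD1 : DifferentiableAt ℝ (DenH1A H k) 0 := by
    unfold DenH1A
    apply DifferentiableAt.add
    · exact ((sd1A_diff hk hk' 0).const_mul H).mul (ΔT_diff 0)
    · apply DifferentiableAt.mul
      · exact (sdA_diff hk hk' 0).const_mul H
      · unfold dDA; fun_prop
  have hmL : DifferentiableAt ℝ (fun r : ℝ =>
      Real.sqrt (2*(1+k)) * (4*(H * sdA k r * ΔT k r) - r*DenH1A H k r)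
        / (H * sdA k r * ΔT k r)^2) 0 := by
    apply DifferentiableAt.div
    · apply DifferentiableAt.const_mul
      exact (hden.const_mul 4).sub (differentiableAt_id.mul hD1)
    · exact hden.pow 2
    · positivity
  have h := (hasDerivAt_pow 3 (0:ℝ)).mul hmL.hasDerivAt
  have hfun : l1A H k = (fun y : ℝ => y ^ 3 * (Real.sqrt (2*(1+k)) *
      (4*(H * sdA k y * ΔT k y) - y*DenH1A H k y) / (H * sdA k y * ΔT k y)^2)) := rfl
  rw [hfun]
  refine h.congr_deriv ?_
  norm_num

theorem hR2'0 (hk : -1 < k) (hk' : k ≠ 1) (hH : H ≠ 0) :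
    HasDerivAt (R2A H k) 0 0 := by
  have hden : HasDerivAt (fun r : ℝ => H*(sDA k r * ΔT k r))
      (H*(sD1A k 0 * ΔT k 0 + sDA k 0 * dDA k 0)) 0 :=
    ((hsD' hk hk' 0).mul (hΔ' 0)).const_mul H
  have hdnz : H*(sDA k 0 * ΔT k 0) ≠ 0 :=
    mul_ne_zero hH (ne_of_gt (mul_pos (hsDpos hk hk' 0) (hΔpos hk hk' 0)))
  have h := (hasDerivAt_const (0:ℝ) ((1-k)^2)).div hden hdnz
  have h2 : HasDerivAt (R2A H k) ((0 * (H*(sDA k 0 * ΔT k 0)) -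
      (1-k)^2 * (H*(sD1A k 0 * ΔT k 0 + sDA k 0 * dDA k 0))) / (H*(sDA k 0 * ΔT k 0))^2) 0 := h
  have he : (0 * (H*(sDA k 0 * ΔT k 0)) -
      (1-k)^2 * (H*(sD1A k 0 * ΔT k 0 + sDA k 0 * dDA k 0))) / (H*(sDA k 0 * ΔT k 0))^2 = 0 := by
    unfold sD1A dDA
    simp
  rw [he] at h2; exact h2

theorem g1A_diff0 (hk : -1 < k) (hk' : k ≠ 1) : DifferentiableAt ℝ (g1A k) 0 := by
  have hDen : DifferentiableAt ℝ (DenA k) 0 := (hDen' hk hk' 0).differentiableAt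
  have hD1 : DifferentiableAt ℝ (Den1A k) 0 := by
    unfold Den1A
    exact ((sd1A_diff hk hk' 0).mul (ΔT_diff 0)).add
      ((sdA_diff hk hk' 0).mul (by unfold dDA; fun_prop))
  unfold g1A
  apply DifferentiableAt.mul differentiableAt_id
  apply DifferentiableAt.div
  · exact DifferentiableAt.const_mul ((hDen.const_mul 2).sub (differentiableAt_id.mul hD1)) _
  · exact hDen.pow 2
  · have := hDenne hk hk' 0; positivity

/-- First r-derivative of `XT`. -/
def Y1 (H k : ℝ) (p : ℝ × ℝ) : Fin 3 → ℝ :=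
  ![lA H k p.1 + hT H k * gA k p.1,
    R1A H k p.1 * Real.cos (φT H k p.1 p.2) - ρT H k p.1 * Real.sin (φT H k p.1 p.2) * gA k p.1,
    R1A H k p.1 * Real.sin (φT H k p.1 p.2) + ρT H k p.1 * Real.cos (φT H k p.1 p.2) * gA k p.1]

/-- Second r-derivative of `XT`. -/
def Y2 (H k : ℝ) (p : ℝ × ℝ) : Fin 3 → ℝ :=
  ![l1A H k p.1 + hT H k * g1A k p.1,
    R2A H k p.1 * Real.cos (φT H k p.1 p.2)
      - 2 * R1A H k p.1 * Real.sin (φT H k p.1 p.2) * gA k p.1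
      - ρT H k p.1 * Real.cos (φT H k p.1 p.2) * (gA k p.1 * gA k p.1)
      - ρT H k p.1 * Real.sin (φT H k p.1 p.2) * g1A k p.1,
    R2A H k p.1 * Real.sin (φT H k p.1 p.2)
      + 2 * R1A H k p.1 * Real.cos (φT H k p.1 p.2) * gA k p.1
      - ρT H k p.1 * Real.sin (φT H k p.1 p.2) * (gA k p.1 * gA k p.1)
      + ρT H k p.1 * Real.cos (φT H k p.1 p.2) * g1A k p.1]

theorem fderiv_eval3 (x0 x1 x2 : ℝ × ℝ → ℝ) (p v : ℝ × ℝ) (a0 a1 a2 : ℝ)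
    (L0 L1 L2 : ℝ × ℝ →L[ℝ] ℝ)
    (h0 : HasFDerivAt x0 L0 p) (h1 : HasFDerivAt x1 L1 p) (h2 : HasFDerivAt x2 L2 p)
    (e0 : L0 v = a0) (e1 : L1 v = a1) (e2 : L2 v = a2) :
    fderiv ℝ (fun q : ℝ × ℝ => (![x0 q, x1 q, x2 q] : Fin 3 → ℝ)) p v = ![a0, a1, a2] := by
  have hX : HasFDerivAt (fun q : ℝ × ℝ => (![x0 q, x1 q, x2 q] : Fin 3 → ℝ))
      (ContinuousLinearMap.pi ![L0, L1, L2]) p := by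
    apply hasFDerivAt_pi''
    intro i
    rw [ContinuousLinearMap.proj_pi]
    fin_cases i <;>
      simp only [Matrix.cons_val_zero, Matrix.cons_val_one, Matrix.head_cons,
        Matrix.cons_val_two, Matrix.tail_cons, Fin.isValue] <;>
      assumption
  rw [hX.fderiv]
  funext i
  rw [ContinuousLinearMap.pi_apply]
  fin_cases i <;>
    simp only [Matrix.cons_val_zero, Matrix.cons_val_one, Matrix.head_cons,
      Matrix.cons_val_two, Matrix.tail_cons, Fin.isValue] <;>
    assumption

end DelAux

open DelAux in
/-- Along the singular curve `{r = 0}` of the conjugate of a spacelike Delaunay surface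
with timelike axis, `det(X_t, X_rr, X_rrr) = 0`. -/
theorem conj_delaunay_timelike_condition3 (H k : ℝ) (hH : H ≠ 0)
    (hk : -1 < k) (hk' : k ≠ 1) :
    ∀ t : ℝ,
      det3 (pdV (XT H k) ((0:ℝ), t))
        (vfDIter (fun _ => ((1:ℝ), (0:ℝ))) 2 (XT H k) ((0:ℝ), t))
        (vfDIter (fun _ => ((1:ℝ), (0:ℝ))) 3 (XT H k) ((0:ℝ), t)) = 0 := by
  intro t
  have hφF : ∀ p : ℝ × ℝ, HasFDerivAt (fun q : ℝ × ℝ => φT H k q.1 q.2)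
      (gA k p.1 • ContinuousLinearMap.fst ℝ ℝ ℝ
        - Real.sqrt ((1+k)/2) • ContinuousLinearMap.snd ℝ ℝ ℝ) p := by
    intro p
    have h1 : HasFDerivAt (fun q : ℝ × ℝ => ∫ τ in (0:ℝ)..q.1,
        Real.sqrt (2 * (1 + k)) * (1 - k) * τ ^ 2 / (Real.sqrt (δT k τ) * ΔT k τ))
        (gA k p.1 • ContinuousLinearMap.fst ℝ ℝ ℝ) p :=
      (hAint hk hk' p.1).comp_hasFDerivAt p hasFDerivAt_fst
    have h2 : HasFDerivAt (fun q : ℝ × ℝ => Real.sqrt ((1+k)/2) * q.2)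
        (Real.sqrt ((1+k)/2) • ContinuousLinearMap.snd ℝ ℝ ℝ) p :=
      hasFDerivAt_snd.const_mul _
    exact h1.sub h2
  have hfst : ∀ (f : ℝ → ℝ) (f' : ℝ) (p : ℝ × ℝ), HasDerivAt f f' p.1 →
      HasFDerivAt (fun q : ℝ × ℝ => f q.1) (f' • ContinuousLinearMap.fst ℝ ℝ ℝ) p :=
    fun f f' p hf => hf.comp_hasFDerivAt p hasFDerivAt_fst
  -- first derivative
  have e1 : vfD (fun _ => ((1:ℝ), (0:ℝ))) (XT H k) = Y1 H k := by
    funext p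
    show fderiv ℝ (fun q : ℝ × ℝ =>
        (![lamT H k q.1 + hT H k * φT H k q.1 q.2,
           ρT H k q.1 * Real.cos (φT H k q.1 q.2),
           ρT H k q.1 * Real.sin (φT H k q.1 q.2)] : Fin 3 → ℝ)) p ((1:ℝ), (0:ℝ))
      = ![lA H k p.1 + hT H k * gA k p.1,
          R1A H k p.1 * Real.cos (φT H k p.1 p.2)
            - ρT H k p.1 * Real.sin (φT H k p.1 p.2) * gA k p.1,
          R1A H k p.1 * Real.sin (φT H k p.1 p.2)
            + ρT H k p.1 * Real.cos (φT H k p.1 p.2) * gA k p.1]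
    refine fderiv_eval3 _ _ _ _ _ _ _ _ _ _ _
      ((hfst _ _ p (hlam' hk hk' hH p.1)).add ((hφF p).const_mul (hT H k)))
      ((hfst _ _ p (hρ' hk hk' hH p.1)).mul ((hφF p).cos))
      ((hfst _ _ p (hρ' hk hk' hH p.1)).mul ((hφF p).sin)) ?_ ?_ ?_ <;>
    · simp only [ContinuousLinearMap.add_apply, ContinuousLinearMap.sub_apply,
        ContinuousLinearMap.smul_apply, ContinuousLinearMap.coe_fst',
        ContinuousLinearMap.coe_snd', ContinuousLinearMap.neg_apply,
        smul_eq_mul, neg_smul, neg_mul,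
        gA_zero, g1A_zero, R1A_zero, mul_zero, zero_mul, add_zero, zero_add,
        mul_one, sub_zero, neg_zero]
      try ring
  -- second derivative
  have e2 : vfD (fun _ => ((1:ℝ), (0:ℝ))) (Y1 H k) = Y2 H k := by
    funext p
    show fderiv ℝ (fun q : ℝ × ℝ =>
        (![lA H k q.1 + hT H k * gA k q.1,
           R1A H k q.1 * Real.cos (φT H k q.1 q.2)
             - ρT H k q.1 * Real.sin (φT H k q.1 q.2) * gA k q.1,
           R1A H k q.1 * Real.sin (φT H k q.1 q.2)
             + ρT H k q.1 * Real.cos (φT H k q.1 q.2) * gA k q.1] : Fin 3 → ℝ)) p ((1:ℝ), (0:ℝ))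
      = ![l1A H k p.1 + hT H k * g1A k p.1,
          R2A H k p.1 * Real.cos (φT H k p.1 p.2)
            - 2 * R1A H k p.1 * Real.sin (φT H k p.1 p.2) * gA k p.1
            - ρT H k p.1 * Real.cos (φT H k p.1 p.2) * (gA k p.1 * gA k p.1)
            - ρT H k p.1 * Real.sin (φT H k p.1 p.2) * g1A k p.1,
          R2A H k p.1 * Real.sin (φT H k p.1 p.2)
            + 2 * R1A H k p.1 * Real.cos (φT H k p.1 p.2) * gA k p.1
            - ρT H k p.1 * Real.sin (φT H k p.1 p.2) * (gA k p.1 * gA k p.1)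
            + ρT H k p.1 * Real.cos (φT H k p.1 p.2) * g1A k p.1]
    refine fderiv_eval3 _ _ _ _ _ _ _ _ _ _ _
      ((hfst _ _ p (hl' hk hk' hH p.1)).add
        ((hfst _ _ p (hg' hk hk' p.1)).const_mul (hT H k)))
      (((hfst _ _ p (hR1' hk hk' hH p.1)).mul ((hφF p).cos)).sub
        (((hfst _ _ p (hρ' hk hk' hH p.1)).mul ((hφF p).sin)).mul
          (hfst _ _ p (hg' hk hk' p.1))))
      (((hfst _ _ p (hR1' hk hk' hH p.1)).mul ((hφF p).sin)).add
        (((hfst _ _ p (hρ' hk hk' hH p.1)).mul ((hφF p).cos)).mul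
          (hfst _ _ p (hg' hk hk' p.1)))) ?_ ?_ ?_ <;>
    · simp only [ContinuousLinearMap.add_apply, ContinuousLinearMap.sub_apply,
        ContinuousLinearMap.smul_apply, ContinuousLinearMap.coe_fst',
        ContinuousLinearMap.coe_snd', ContinuousLinearMap.neg_apply,
        smul_eq_mul, neg_smul, neg_mul,
        gA_zero, g1A_zero, R1A_zero, mul_zero, zero_mul, add_zero, zero_add,
        mul_one, sub_zero, neg_zero, Pi.mul_apply]
      try ring
  have hφq : HasFDerivAt (fun q : ℝ × ℝ => φT H k q.1 q.2)
      (gA k 0 • ContinuousLinearMap.fst ℝ ℝ ℝ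
        - Real.sqrt ((1+k)/2) • ContinuousLinearMap.snd ℝ ℝ ℝ) ((0:ℝ), t) :=
    hφF ((0:ℝ), t)
  set κ := deriv (g1A k) 0 with hκdef
  have hκ : HasDerivAt (g1A k) κ 0 := (g1A_diff0 hk hk').hasDerivAt
  -- third derivative at (0, t)
  have h3 : fderiv ℝ (Y2 H k) ((0:ℝ), t) ((1:ℝ), (0:ℝ)) =
      ![hT H k * κ,
        -(ρT H k 0 * Real.sin (φT H k 0 t) * κ),
        ρT H k 0 * Real.cos (φT H k 0 t) * κ] := by
    show fderiv ℝ (fun q : ℝ × ℝ =>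
        (![l1A H k q.1 + hT H k * g1A k q.1,
           R2A H k q.1 * Real.cos (φT H k q.1 q.2)
             - 2 * R1A H k q.1 * Real.sin (φT H k q.1 q.2) * gA k q.1
             - ρT H k q.1 * Real.cos (φT H k q.1 q.2) * (gA k q.1 * gA k q.1)
             - ρT H k q.1 * Real.sin (φT H k q.1 q.2) * g1A k q.1,
           R2A H k q.1 * Real.sin (φT H k q.1 q.2)
             + 2 * R1A H k q.1 * Real.cos (φT H k q.1 q.2) * gA k q.1
             - ρT H k q.1 * Real.sin (φT H k q.1 q.2) * (gA k q.1 * gA k q.1)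
             + ρT H k q.1 * Real.cos (φT H k q.1 q.2) * g1A k q.1] : Fin 3 → ℝ))
        ((0:ℝ), t) ((1:ℝ), (0:ℝ)) = _
    refine fderiv_eval3 _ _ _ _ _ _ _ _ _ _ _
      ((hfst _ _ ((0:ℝ), t) (hl1'0 hk hk' hH)).add
        ((hfst _ _ ((0:ℝ), t) hκ).const_mul (hT H k)))
      (((((hfst _ _ ((0:ℝ), t) (hR2'0 hk hk' hH)).mul (hφq.cos)).sub
        ((((hfst _ _ ((0:ℝ), t) (hR1' hk hk' hH 0)).const_mul 2).mul
          (hφq.sin)).mul (hfst _ _ ((0:ℝ), t) (hg' hk hk' 0)))).sub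
        (((hfst _ _ ((0:ℝ), t) (hρ' hk hk' hH 0)).mul (hφq.cos)).mul
          ((hfst _ _ ((0:ℝ), t) (hg' hk hk' 0)).mul
            (hfst _ _ ((0:ℝ), t) (hg' hk hk' 0))))).sub
        (((hfst _ _ ((0:ℝ), t) (hρ' hk hk' hH 0)).mul (hφq.sin)).mul
          (hfst _ _ ((0:ℝ), t) hκ)))
      (((((hfst _ _ ((0:ℝ), t) (hR2'0 hk hk' hH)).mul (hφq.sin)).add
        ((((hfst _ _ ((0:ℝ), t) (hR1' hk hk' hH 0)).const_mul 2).mul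
          (hφq.cos)).mul (hfst _ _ ((0:ℝ), t) (hg' hk hk' 0)))).sub
        (((hfst _ _ ((0:ℝ), t) (hρ' hk hk' hH 0)).mul (hφq.sin)).mul
          ((hfst _ _ ((0:ℝ), t) (hg' hk hk' 0)).mul
            (hfst _ _ ((0:ℝ), t) (hg' hk hk' 0))))).add
        (((hfst _ _ ((0:ℝ), t) (hρ' hk hk' hH 0)).mul (hφq.cos)).mul
          (hfst _ _ ((0:ℝ), t) hκ))) ?_ ?_ ?_ <;>
    · simp only [ContinuousLinearMap.add_apply, ContinuousLinearMap.sub_apply,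
        ContinuousLinearMap.smul_apply, ContinuousLinearMap.coe_fst',
        ContinuousLinearMap.coe_snd', ContinuousLinearMap.neg_apply,
        smul_eq_mul, neg_smul, neg_mul,
        gA_zero, g1A_zero, R1A_zero, mul_zero, zero_mul, add_zero, zero_add,
        mul_one, sub_zero, neg_zero, Pi.mul_apply]
      try ring
  -- t-derivative at (0, t)
  have hpdV : pdV (XT H k) ((0:ℝ), t) =
      ![-(hT H k * Real.sqrt ((1+k)/2)),
        ρT H k 0 * Real.sin (φT H k 0 t) * Real.sqrt ((1+k)/2),
        -(ρT H k 0 * Real.cos (φT H k 0 t) * Real.sqrt ((1+k)/2))] := by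
    show fderiv ℝ (fun q : ℝ × ℝ =>
        (![lamT H k q.1 + hT H k * φT H k q.1 q.2,
           ρT H k q.1 * Real.cos (φT H k q.1 q.2),
           ρT H k q.1 * Real.sin (φT H k q.1 q.2)] : Fin 3 → ℝ)) ((0:ℝ), t) ((0:ℝ), (1:ℝ)) = _
    refine fderiv_eval3 _ _ _ _ _ _ _ _ _ _ _
      ((hfst _ _ ((0:ℝ), t) (hlam' hk hk' hH 0)).add
        (hφq.const_mul (hT H k)))
      ((hfst _ _ ((0:ℝ), t) (hρ' hk hk' hH 0)).mul (hφq.cos))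
      ((hfst _ _ ((0:ℝ), t) (hρ' hk hk' hH 0)).mul (hφq.sin)) ?_ ?_ ?_ <;>
    · simp only [ContinuousLinearMap.add_apply, ContinuousLinearMap.sub_apply,
        ContinuousLinearMap.smul_apply, ContinuousLinearMap.coe_fst',
        ContinuousLinearMap.coe_snd', ContinuousLinearMap.neg_apply,
        smul_eq_mul, neg_smul, neg_mul,
        gA_zero, g1A_zero, R1A_zero, mul_zero, zero_mul, add_zero, zero_add,
        mul_one, sub_zero, neg_zero]
      try ring
  have i2 : vfDIter (fun _ => ((1:ℝ), (0:ℝ))) 2 (XT H k) =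
      vfD (fun _ => ((1:ℝ), (0:ℝ))) (vfD (fun _ => ((1:ℝ), (0:ℝ))) (XT H k)) := rfl
  have i3 : vfDIter (fun _ => ((1:ℝ), (0:ℝ))) 3 (XT H k) ((0:ℝ), t) =
      fderiv ℝ (Y2 H k) ((0:ℝ), t) ((1:ℝ), (0:ℝ)) := by
    have : vfDIter (fun _ => ((1:ℝ), (0:ℝ))) 3 (XT H k) =
        vfD (fun _ => ((1:ℝ), (0:ℝ)))
          (vfD (fun _ => ((1:ℝ), (0:ℝ))) (vfD (fun _ => ((1:ℝ), (0:ℝ))) (XT H k))) := rfl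
    rw [this, e1, e2]; rfl
  rw [i2, e1, e2, i3, h3, hpdV]
  simp [det3, Matrix.det_fin_three, Y2]
  ring
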